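/- (Multiple buyers: approximate stability of output.) Let f₁,…,fₙ be monotone nondecreasing submodular with f_i(∅)=0 and curvatures κ_i, let X^s ⊆ V with |X^s| = s, define prices p(x) = max_j (f_j(X^s) - f_j(X^s \ {x})) for x ∈ X^s and p(y) = +∞ otherwise, and let (X₁,…,Xₙ) be a partition of X^s such that p(x) = f_i(X^s) - f_i(X^s\{x}) for every x ∈ X_i. Then for every i: (a) f_i(X_i) - p(X_i) ≥ 0, and (b) for every X ⊆ X^s, (1 - κ_i(s)) f_i(X) - p(X) ≤ 0. Hence (p, (X₁,…,Xₙ)) is (1-κ(s))-stable with κ(s) = max_i κ_i(s). -/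

import Mathlib

lemma aux_marg {V : Type*} [DecidableEq V] (f : Finset V → ℝ)
    (hsub : ∀ X Y : Finset V, f X + f Y ≥ f (X ∩ Y) + f (X ∪ Y))
    (Xs : Finset V) :
    ∀ X : Finset V, X ⊆ Xs → ∑ x ∈ X, (f Xs - f (Xs.erase x)) ≤ f X - f ∅ := by
  intro X
  induction X using Finset.induction_on with
  | empty => simp
  | @insert a X' ha ih =>
    intro hsubXs
    have haXs : a ∈ Xs := hsubXs (Finset.mem_insert_self a X')
    have hX' : X' ⊆ Xs := (Finset.subset_insert a X').trans hsubXs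
    rw [Finset.sum_insert ha]
    have hU : insert a X' ∪ Xs.erase a = Xs := by
      ext y
      simp only [Finset.mem_union, Finset.mem_insert, Finset.mem_erase]
      constructor
      · rintro (⟨rfl | hy⟩ | ⟨_, hy⟩)
        · exact haXs
        · exact hX' (by assumption)
        · exact hy
      · intro hy
        by_cases hya : y = a
        · exact Or.inl (Or.inl hya)
        · exact Or.inr ⟨hya, hy⟩
    have hI : insert a X' ∩ Xs.erase a = X' := by
      ext y
      simp only [Finset.mem_inter, Finset.mem_insert, Finset.mem_erase]
      constructor
      · rintro ⟨rfl | hy, hya, _⟩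
        · exact absurd rfl hya
        · exact hy
      · intro hy
        exact ⟨Or.inr hy, fun h => ha (h ▸ hy), hX' hy⟩
    have := hsub (insert a X') (Xs.erase a)
    rw [hU, hI] at this
    have key : f Xs - f (Xs.erase a) ≤ f (insert a X') - f X' := by linarith
    have := ih hX'
    rw [Finset.insert_subset_iff] at hsubXs
    linarith

lemma aux_subadd {V : Type*} [DecidableEq V] (f : Finset V → ℝ)
    (hsub : ∀ X Y : Finset V, f X + f Y ≥ f (X ∩ Y) + f (X ∪ Y))
    (hempty : f ∅ = 0) :
    ∀ X : Finset V, f X ≤ ∑ x ∈ X, f {x} := by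
  intro X
  induction X using Finset.induction_on with
  | empty => simp [hempty]
  | @insert a X' ha ih =>
    rw [Finset.sum_insert ha]
    have := hsub {a} X'
    have hI : ({a} : Finset V) ∩ X' = ∅ := by
      rw [Finset.singleton_inter_of_notMem ha]
    have hU : ({a} : Finset V) ∪ X' = insert a X' := by
      rw [Finset.insert_eq]
    rw [hI, hU, hempty] at this
    linarith

/-- Theorem 8 (multiple buyers: approximate stability of the output). -/
theorem stmt18 {V : Type*} [DecidableEq V] [Fintype V] (n : ℕ) [NeZero n]
    (fi : Fin n → Finset V → ℝ)
    (hmono : ∀ i, ∀ X Y : Finset V, X ⊆ Y → fi i X ≤ fi i Y)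
    (hsub : ∀ i, ∀ X Y : Finset V, fi i X + fi i Y ≥ fi i (X ∩ Y) + fi i (X ∪ Y))
    (hempty : ∀ i, fi i ∅ = 0)
    (hpos : ∀ i (x : V), 0 < fi i {x})
    (s : ℕ) (Xs : Finset V) (hXs : Xs.card = s)
    (κ : Fin n → ℝ)
    (hκ : ∀ i, ∀ (X : Finset V) (x : V), X.card = s → x ∈ X →
      (1 - κ i) * fi i {x} ≤ fi i X - fi i (X.erase x))
    (p : V → ℝ)
    (hp : ∀ x ∈ Xs, p x = (Finset.univ : Finset (Fin n)).sup' Finset.univ_nonempty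
      (fun j => fi j Xs - fi j (Xs.erase x)))
    (Xi : Fin n → Finset V)
    (hpart1 : ∀ i, Xi i ⊆ Xs)
    (hpart2 : ∀ i j, i ≠ j → Disjoint (Xi i) (Xi j))
    (hpart3 : Finset.univ.biUnion Xi = Xs)
    (hprice : ∀ i, ∀ x ∈ Xi i, p x = fi i Xs - fi i (Xs.erase x)) :
    ∀ i : Fin n,
      (fi i (Xi i) - ∑ x ∈ Xi i, p x ≥ 0) ∧
      (∀ X : Finset V, X ⊆ Xs → (1 - κ i) * fi i X - ∑ x ∈ X, p x ≤ 0) := by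
  intro i
  constructor
  · -- part (a)
    have hsum : ∑ x ∈ Xi i, p x = ∑ x ∈ Xi i, (fi i Xs - fi i (Xs.erase x)) :=
      Finset.sum_congr rfl (fun x hx => hprice i x hx)
    have := aux_marg (fi i) (hsub i) Xs (Xi i) (hpart1 i)
    rw [hsum]
    rw [hempty i] at this
    linarith
  · -- part (b)
    intro X hX
    have hpge : ∀ x ∈ X, fi i Xs - fi i (Xs.erase x) ≤ p x := by
      intro x hx
      rw [hp x (hX hx)]
      exact Finset.le_sup' (fun j => fi j Xs - fi j (Xs.erase x)) (Finset.mem_univ i)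
    by_cases hκpos : 0 ≤ 1 - κ i
    · have h1 : (1 - κ i) * fi i X ≤ ∑ x ∈ X, (1 - κ i) * fi i {x} := by
        rw [← Finset.mul_sum]
        exact mul_le_mul_of_nonneg_left (aux_subadd (fi i) (hsub i) (hempty i) X) hκpos
      have h2 : ∑ x ∈ X, (1 - κ i) * fi i {x} ≤ ∑ x ∈ X, p x := by
        apply Finset.sum_le_sum
        intro x hx
        exact le_trans (hκ i Xs x hXs (hX hx)) (hpge x hx)
      linarith
    · push_neg at hκpos
      have hfX : 0 ≤ fi i X := by
        have := hmono i ∅ X (Finset.empty_subset X)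
        rw [hempty i] at this; exact this
      have h1 : (1 - κ i) * fi i X ≤ 0 := mul_nonpos_of_nonpos_of_nonneg hκpos.le hfX
      have h2 : 0 ≤ ∑ x ∈ X, p x := by
        apply Finset.sum_nonneg
        intro x hx
        refine le_trans ?_ (hpge x hx)
        have := hmono i (Xs.erase x) Xs (Finset.erase_subset x Xs)
        linarith
      linarith
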